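/- arXiv:0903.2408 — 5 statements merged into one kernel-verified Lean document; each statement's English description precedes it below -/
import Mathlib

section
/- For all real numbers y > 0 and v > 0, sup over λ with 0 < λ < 1/v of ( λ·y − λ²·v²/(1 − λ·v) ) is greater than or equal to y²/(2·v·y + 4·v²). -/
open Set

/-- Birgé–Massart type inequality:
`sup_{0 < λ < 1/v} (λ y − λ² v² / (1 − λ v)) ≥ y² / (2 v y + 4 v²)`. -/
theorem stmt_3 (y v : ℝ) (hy : 0 < y) (hv : 0 < v) :
    y ^ 2 / (2 * v * y + 4 * v ^ 2) ≤
      sSup ((fun l : ℝ => l * y - l ^ 2 * v ^ 2 / (1 - l * v)) '' Set.Ioo 0 (1 / v)) := by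
  have hden : 0 < y + 2 * v := by linarith
  set l0 : ℝ := y / (v * (y + 2 * v)) with hl0
  have hl0pos : 0 < l0 := by positivity
  have hl0v : l0 * v = y / (y + 2 * v) := by
    field_simp [hl0]
    rw [hl0]; field_simp
  have hl0lt : l0 < 1 / v := by
    rw [lt_div_iff₀ hv, hl0v, div_lt_one hden]; linarith
  apply le_csSup
  · refine ⟨y / v, ?_⟩
    rintro x ⟨l, ⟨hl1, hl2⟩, rfl⟩
    have h1 : 0 < 1 - l * v := by
      have := (lt_div_iff₀ hv).mp hl2
      linarith
    have h2 : 0 ≤ l ^ 2 * v ^ 2 / (1 - l * v) := by positivity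
    have h3 : l * y ≤ y / v := by
      rw [le_div_iff₀ hv]
      nlinarith [(lt_div_iff₀ hv).mp hl2]
    simp only
    linarith
  · refine ⟨l0, ⟨hl0pos, hl0lt⟩, ?_⟩
    have hne : (1 : ℝ) - l0 * v = 2 * v / (y + 2 * v) := by
      rw [hl0v]; field_simp; ring
    show l0 * y - l0 ^ 2 * v ^ 2 / (1 - l0 * v) = y ^ 2 / (2 * v * y + 4 * v ^ 2)
    rw [hne, hl0]
    field_simp
    ring
end

section
/- Let N be a nonnegative random variable on a probability space (Ω, 𝓐, P) and let v > 0 be a constant such that E[N^p] ≤ p!·v^p for every integer p ≥ 1. Then for every δ ≥ 0 and every x > 0, P( N > v^{1+δ}·max(x, 1) ) ≤ 2 · exp( −(1/2)·v^δ·max(x, 1) ). -/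
open MeasureTheory Real

lemma real_exp_tsum (y : ℝ) : Real.exp y = ∑' n : ℕ, y ^ n / n.factorial := by
  rw [Real.exp_eq_exp_ℝ, NormedSpace.exp_eq_tsum_div]

/-- If a nonnegative random variable `N` satisfies `E[N^p] ≤ p! v^p` for all integers
`p ≥ 1`, then `P(N > v^{1+δ} max(x,1)) ≤ 2 exp(−(1/2) v^δ max(x,1))`. -/
theorem stmt_6 {Ω : Type*} [MeasurableSpace Ω] (P : Measure Ω) [IsProbabilityMeasure P]
    (N : Ω → ℝ) (hN : Measurable N) (hN0 : ∀ ω, 0 ≤ N ω) (v : ℝ) (hv : 0 < v)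
    (hmom : ∀ p : ℕ, 1 ≤ p →
      ∫⁻ ω, ENNReal.ofReal (N ω ^ p) ∂P ≤ ENNReal.ofReal ((Nat.factorial p : ℝ) * v ^ p)) :
    ∀ δ : ℝ, 0 ≤ δ → ∀ x : ℝ, 0 < x →
      P {ω | v ^ (1 + δ) * max x 1 < N ω} ≤
        ENNReal.ofReal (2 * Real.exp (-(1 / 2) * v ^ δ * max x 1)) := by
  intro δ hδ x hx
  have h2v : (0:ℝ) < 2 * v := by linarith
  -- MGF bound: ∫ exp(N/(2v)) ≤ 2
  have hmgf : ∫⁻ ω, ENNReal.ofReal (Real.exp (N ω / (2 * v))) ∂P ≤ 2 := by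
    have heq : ∀ ω, ENNReal.ofReal (Real.exp (N ω / (2 * v)))
        = ∑' p : ℕ, ENNReal.ofReal (N ω ^ p) * ENNReal.ofReal (1 / ((2*v)^p * p.factorial)) := by
      intro ω
      rw [real_exp_tsum]
      rw [ENNReal.ofReal_tsum_of_nonneg]
      · congr 1; ext p
        rw [← ENNReal.ofReal_mul (pow_nonneg (hN0 ω) p)]
        congr 1
        rw [div_pow, div_div, div_eq_mul_one_div]
      · intro p
        exact div_nonneg (pow_nonneg (div_nonneg (hN0 ω) (by positivity)) p) (by positivity)
      · exact Real.summable_pow_div_factorial _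
    calc ∫⁻ ω, ENNReal.ofReal (Real.exp (N ω / (2 * v))) ∂P
        = ∑' p : ℕ, (∫⁻ ω, ENNReal.ofReal (N ω ^ p) ∂P) * ENNReal.ofReal (1 / ((2*v)^p * p.factorial)) := by
          simp_rw [heq]
          rw [lintegral_tsum (fun p => ((hN.pow_const p).ennreal_ofReal.mul_const _).aemeasurable)]
          congr 1; ext p
          rw [lintegral_mul_const _ (hN.pow_const p).ennreal_ofReal]
      _ ≤ ∑' p : ℕ, ENNReal.ofReal ((1/2) ^ p) := by
          apply ENNReal.tsum_le_tsum
          intro p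
          rcases Nat.eq_zero_or_pos p with hp | hp
          · subst hp
            simp [lintegral_one]
          · calc (∫⁻ ω, ENNReal.ofReal (N ω ^ p) ∂P) * ENNReal.ofReal (1 / ((2*v)^p * p.factorial))
                ≤ ENNReal.ofReal ((Nat.factorial p : ℝ) * v ^ p) * ENNReal.ofReal (1 / ((2*v)^p * p.factorial)) :=
                  mul_le_mul_left (hmom p hp) _
              _ = ENNReal.ofReal ((1/2)^p) := by
                  rw [← ENNReal.ofReal_mul (by positivity)]
                  congr 1
                  have h1 : ((p.factorial : ℝ)) ≠ 0 := by positivity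
                  have h2 : ((2*v)^p : ℝ) ≠ 0 := by positivity
                  field_simp
                  rw [mul_pow]
                  rw [mul_right_comm, ← mul_pow]; norm_num
      _ = 2 := by
          rw [← ENNReal.ofReal_tsum_of_nonneg (fun p => by positivity)
            (summable_geometric_of_lt_one (by norm_num) (by norm_num))]
          rw [tsum_geometric_of_lt_one (by norm_num) (by norm_num)]
          norm_num
  -- Markov
  set m := max x 1 with hm
  have hm1 : (1:ℝ) ≤ m := le_max_right _ _
  set a := v ^ (1 + δ) * m with ha
  have hava : a / (2 * v) = v ^ δ * m / 2 := by
    rw [ha, Real.rpow_add hv, Real.rpow_one]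
    field_simp
  have hmarkov : ENNReal.ofReal (Real.exp (a / (2*v))) * P {ω | a < N ω}
      ≤ ∫⁻ ω, ENNReal.ofReal (Real.exp (N ω / (2 * v))) ∂P := by
    have := mul_meas_ge_le_lintegral₀ (μ := P)
      (f := fun ω => ENNReal.ofReal (Real.exp (N ω / (2 * v))))
      ((hN.div_const _).exp.ennreal_ofReal.aemeasurable)
      (ENNReal.ofReal (Real.exp (a / (2*v))))
    refine le_trans (mul_le_mul_right (measure_mono ?_) _) this
    intro ω hω
    simp only [Set.mem_setOf_eq] at hω ⊢
    refine ENNReal.ofReal_le_ofReal (Real.exp_le_exp.2 ?_)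
    gcongr

  have hexp_pos : (0:ℝ) < Real.exp (a / (2*v)) := Real.exp_pos _
  have hne : ENNReal.ofReal (Real.exp (a / (2*v))) ≠ 0 :=
    (ENNReal.ofReal_pos.2 hexp_pos).ne'
  have : P {ω | a < N ω} ≤ 2 / ENNReal.ofReal (Real.exp (a / (2*v))) := by
    rw [ENNReal.le_div_iff_mul_le (Or.inl hne) (Or.inl ENNReal.ofReal_ne_top)]
    calc P {ω | a < N ω} * ENNReal.ofReal (Real.exp (a / (2*v)))
        = ENNReal.ofReal (Real.exp (a / (2*v))) * P {ω | a < N ω} := mul_comm _ _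
      _ ≤ _ := hmarkov
      _ ≤ 2 := hmgf
  refine this.trans_eq ?_
  have h2 : (2:ENNReal) = ENNReal.ofReal 2 := by norm_num
  rw [h2, ← ENNReal.ofReal_div_of_pos hexp_pos]
  congr 1
  rw [div_eq_mul_inv, ← Real.exp_neg, hava]
  ring_nf
end

section
/- Let k ≥ 2 be an integer and let X₂, X₃, …, X_k be nonnegative, identically distributed random variables on a probability space (Ω, 𝓐, P), such that the subfamily of the X_n with odd index n is mutually independent and the subfamily of the X_n with even index n is mutually independent. Let F̂(λ) := E[e^{−λX₂}] for λ > 0. Then for every λ > 0 and every t ≥ 0, P( X₂ + X₃ + ⋯ + X_k ≤ t ) ≤ 2 · F̂(λ)^{(k−2)/2} · e^{λt/2}. -/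
open MeasureTheory Real ProbabilityTheory

private lemma card_odd_even (k : ℕ) :
    ((Finset.Icc 2 k).filter (fun n => Odd n)).card = (k - 1) / 2 ∧
    ((Finset.Icc 2 k).filter (fun n => Even n)).card = k / 2 := by
  induction k with
  | zero => simp
  | succ k ih =>
    rcases Nat.lt_or_ge (k + 1) 2 with h | h
    · have hk0 : k = 0 := by omega
      subst hk0
      simp
    · rw [← Finset.insert_Icc_right_eq_Icc_add_one (by omega), Finset.filter_insert,
        Finset.filter_insert]
      have hnm : k + 1 ∉ Finset.Icc 2 k := by simp
      rcases Nat.even_or_odd (k + 1) with he | ho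
      · have h1 : ¬ Odd (k + 1) := by simpa using he
        have h2 : (k + 1) % 2 = 0 := Nat.even_iff.mp he
        rw [if_neg h1, if_pos he,
          Finset.card_insert_of_notMem (fun hx => hnm (Finset.mem_filter.mp hx).1)]
        omega
      · have h1 : ¬ Even (k + 1) := by simpa using ho
        have h2 : (k + 1) % 2 = 1 := Nat.odd_iff.mp ho
        rw [if_pos ho, if_neg h1,
          Finset.card_insert_of_notMem (fun hx => hnm (Finset.mem_filter.mp hx).1)]
        omega

private lemma chernoff_half {Ω : Type*} [MeasurableSpace Ω] (P : Measure Ω)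
    [IsProbabilityMeasure P]
    (k : ℕ) (X : ℕ → Ω → ℝ) (hmeas : ∀ n, Measurable (X n))
    (hpos : ∀ n ∈ Finset.Icc 2 k, ∀ ω, 0 ≤ X n ω)
    (hid : ∀ n ∈ Finset.Icc 2 k, IdentDistrib (X n) (X 2) P P)
    (q : ℕ → Prop) [DecidablePred q]
    (hindep : iIndepFun
        (fun n : {n : ℕ // n ∈ Finset.Icc 2 k ∧ q n} => X n) P)
    (l : ℝ) (hl : 0 < l) (ε : ℝ) :
    (P {ω | ∑ n ∈ (Finset.Icc 2 k).filter q, X n ω ≤ ε}).toReal ≤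
      Real.exp (l * ε) *
        (∫ ω, Real.exp (-l * X 2 ω) ∂P) ^ (((Finset.Icc 2 k).filter q).card) := by
  classical
  -- integrability of exp(-l * Z) for nonnegative measurable Z
  have hIntOf : ∀ (Z : Ω → ℝ), Measurable Z → (∀ ω, 0 ≤ Z ω) →
      Integrable (fun ω => Real.exp (-l * Z ω)) P := by
    intro Z hZ hZ0
    refine Integrable.mono' (integrable_const 1)
      ((hZ.const_mul (-l)).exp.aestronglyMeasurable) (ae_of_all _ fun ω => ?_)
    rw [Real.norm_eq_abs, abs_of_pos (Real.exp_pos _)]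
    rw [Real.exp_le_one_iff]
    nlinarith [hZ0 ω]
  set s : Finset {n : ℕ // n ∈ Finset.Icc 2 k ∧ q n} :=
    (Finset.Icc 2 k).subtype (fun n => n ∈ Finset.Icc 2 k ∧ q n) with hs
  have hfilter : (Finset.Icc 2 k).filter (fun n => n ∈ Finset.Icc 2 k ∧ q n)
      = (Finset.Icc 2 k).filter q := by
    apply Finset.filter_congr
    intro n hn
    simp [hn]
  have hS : (fun ω => ∑ n ∈ (Finset.Icc 2 k).filter q, X n ω)
      = ∑ i ∈ s, (fun (i : {n : ℕ // n ∈ Finset.Icc 2 k ∧ q n}) => X i.1) i := by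
    funext ω
    rw [Finset.sum_apply]
    have h := Finset.sum_subtype_eq_sum_filter (s := Finset.Icc 2 k) (fun n => X n ω)
      (p := fun n => n ∈ Finset.Icc 2 k ∧ q n)
    rw [hfilter] at h
    exact h.symm
  have hmeasS : Measurable (fun ω => ∑ n ∈ (Finset.Icc 2 k).filter q, X n ω) :=
    Finset.measurable_sum _ (fun n _ => hmeas n)
  have hposS : ∀ ω, 0 ≤ ∑ n ∈ (Finset.Icc 2 k).filter q, X n ω := fun ω =>
    Finset.sum_nonneg fun n hn => hpos n (Finset.mem_filter.mp hn).1 ω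
  have hintS : Integrable
      (fun ω => Real.exp (-l * (∑ n ∈ (Finset.Icc 2 k).filter q, X n ω))) P :=
    hIntOf _ hmeasS hposS
  have key := measure_le_le_exp_mul_mgf (μ := P)
    (X := fun ω => ∑ n ∈ (Finset.Icc 2 k).filter q, X n ω) (t := -l) ε
    (by linarith) hintS
  rw [neg_neg] at key
  refine key.trans ?_
  have hmgf : mgf (fun ω => ∑ n ∈ (Finset.Icc 2 k).filter q, X n ω) P (-l)
      = (∫ ω, Real.exp (-l * X 2 ω) ∂P) ^ (((Finset.Icc 2 k).filter q).card) := by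
    rw [hS, hindep.mgf_sum (fun i => hmeas i) s]
    have hm : ∀ i ∈ s, mgf (X (i : {n : ℕ // n ∈ Finset.Icc 2 k ∧ q n}).1) P (-l)
        = ∫ ω, Real.exp (-l * X 2 ω) ∂P := by
      intro i _
      have h2 := (hid i.1 i.2.1).comp
        (u := fun x => Real.exp (-l * x)) (measurable_exp.comp (measurable_id.const_mul (-l)))
      have := h2.integral_eq
      simpa [mgf, Function.comp] using this
    rw [Finset.prod_congr rfl hm, Finset.prod_const]
    congr 1
    rw [hs, Finset.card_subtype, hfilter]
  rw [hmgf]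

/-- Lower-tail Chernoff bound for a 2-dependent family: if `X₂, …, X_k` are nonnegative,
identically distributed, the odd-indexed variables are mutually independent and the
even-indexed variables are mutually independent, then with `F̂(λ) = E[e^{−λX₂}]`,
`P(X₂ + ⋯ + X_k ≤ t) ≤ 2 F̂(λ)^{(k−2)/2} e^{λt/2}`. -/
theorem stmt_9 {Ω : Type*} [MeasurableSpace Ω] (P : Measure Ω) [IsProbabilityMeasure P]
    (k : ℕ) (hk : 2 ≤ k) (X : ℕ → Ω → ℝ) (hmeas : ∀ n, Measurable (X n))
    (hpos : ∀ n ∈ Finset.Icc 2 k, ∀ ω, 0 ≤ X n ω)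
    (hid : ∀ n ∈ Finset.Icc 2 k, IdentDistrib (X n) (X 2) P P)
    (hindep_odd :
      iIndepFun
        (fun n : {n : ℕ // n ∈ Finset.Icc 2 k ∧ Odd n} => X n) P)
    (hindep_even :
      iIndepFun
        (fun n : {n : ℕ // n ∈ Finset.Icc 2 k ∧ Even n} => X n) P) :
    ∀ l : ℝ, 0 < l → ∀ t : ℝ, 0 ≤ t →
      P {ω | ∑ n ∈ Finset.Icc 2 k, X n ω ≤ t} ≤
        ENNReal.ofReal
          (2 * (∫ ω, Real.exp (-l * X 2 ω) ∂P) ^ (((k : ℝ) - 2) / 2) *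
            Real.exp (l * t / 2)) := by
  classical
  intro l hl t ht
  set F := ∫ ω, Real.exp (-l * X 2 ω) ∂P with hF
  have h2mem : (2 : ℕ) ∈ Finset.Icc 2 k := Finset.mem_Icc.mpr ⟨le_refl 2, hk⟩
  -- integrability of exp(-l X 2)
  have hint2 : Integrable (fun ω => Real.exp (-l * X 2 ω)) P := by
    refine Integrable.mono' (integrable_const 1)
      (((hmeas 2).const_mul (-l)).exp.aestronglyMeasurable) (ae_of_all _ fun ω => ?_)
    rw [Real.norm_eq_abs, abs_of_pos (Real.exp_pos _), Real.exp_le_one_iff]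
    nlinarith [hpos 2 h2mem ω]
  have hF0 : 0 < F := by
    have := mgf_pos (X := X 2) (μ := P) (t := -l) hint2
    simpa [mgf, hF] using this
  have hF1 : F ≤ 1 := by
    rw [hF]
    calc ∫ ω, Real.exp (-l * X 2 ω) ∂P ≤ ∫ _, (1 : ℝ) ∂P := by
          refine integral_mono hint2 (integrable_const 1) fun ω => ?_
          rw [Real.exp_le_one_iff]
          nlinarith [hpos 2 h2mem ω]
      _ = 1 := by simp
  -- cardinalities
  obtain ⟨hco, hce⟩ := card_odd_even k
  have hcardo : ((k : ℝ) - 2) / 2 ≤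
      ((((Finset.Icc 2 k).filter (fun n => Odd n)).card : ℕ) : ℝ) := by
    have h1 : k ≤ 2 * ((Finset.Icc 2 k).filter (fun n => Odd n)).card + 2 := by omega
    have h2 : (k : ℝ) ≤ 2 * (((Finset.Icc 2 k).filter (fun n => Odd n)).card : ℝ) + 2 := by
      exact_mod_cast h1
    linarith
  have hcarde : ((k : ℝ) - 2) / 2 ≤
      ((((Finset.Icc 2 k).filter (fun n => Even n)).card : ℕ) : ℝ) := by
    have h1 : k ≤ 2 * ((Finset.Icc 2 k).filter (fun n => Even n)).card + 2 := by omega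
    have h2 : (k : ℝ) ≤ 2 * (((Finset.Icc 2 k).filter (fun n => Even n)).card : ℝ) + 2 := by
      exact_mod_cast h1
    linarith
  -- the common bound
  set B : ℝ := F ^ (((k : ℝ) - 2) / 2) * Real.exp (l * t / 2) with hB
  have hBnn : 0 ≤ B := mul_nonneg (Real.rpow_nonneg hF0.le _) (Real.exp_pos _).le
  have hbound : ∀ (q : ℕ → Prop) [DecidablePred q],
      iIndepFun
        (fun n : {n : ℕ // n ∈ Finset.Icc 2 k ∧ q n} => X n) P →
      ((k : ℝ) - 2) / 2 ≤ ((((Finset.Icc 2 k).filter q).card : ℕ) : ℝ) →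
      P {ω | ∑ n ∈ (Finset.Icc 2 k).filter q, X n ω ≤ t / 2} ≤ ENNReal.ofReal B := by
    intro q _ hindep hcard
    rw [ENNReal.le_ofReal_iff_toReal_le (measure_ne_top P _) hBnn]
    refine (chernoff_half P k X hmeas hpos hid q hindep l hl (t / 2)).trans ?_
    rw [hB]
    have hpow : F ^ (((Finset.Icc 2 k).filter q).card) ≤ F ^ (((k : ℝ) - 2) / 2) := by
      rw [← Real.rpow_natCast F (((Finset.Icc 2 k).filter q).card)]
      exact Real.rpow_le_rpow_of_exponent_ge hF0 hF1 hcard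
    have hexp : Real.exp (l * (t / 2)) = Real.exp (l * t / 2) := by ring_nf
    rw [mul_comm (F ^ (((k : ℝ) - 2) / 2)) (Real.exp (l * t / 2)), ← hexp]
    exact mul_le_mul_of_nonneg_left hpow (Real.exp_pos _).le
  have hPodd := hbound (fun n => Odd n) hindep_odd hcardo
  have hPeven := hbound (fun n => Even n) hindep_even hcarde
  -- splitting the event
  have hsplit : ∀ ω, ∑ n ∈ Finset.Icc 2 k, X n ω =
      (∑ n ∈ (Finset.Icc 2 k).filter (fun n => Odd n), X n ω) +
      (∑ n ∈ (Finset.Icc 2 k).filter (fun n => Even n), X n ω) := by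
    intro ω
    rw [← Finset.sum_filter_add_sum_filter_not (Finset.Icc 2 k) (fun n => Odd n)]
    congr 1
    apply Finset.sum_congr _ fun _ _ => rfl
    apply Finset.filter_congr
    intro n _
    simp [Nat.not_odd_iff_even]
  have hsub : {ω | ∑ n ∈ Finset.Icc 2 k, X n ω ≤ t} ⊆
      {ω | ∑ n ∈ (Finset.Icc 2 k).filter (fun n => Odd n), X n ω ≤ t / 2} ∪
      {ω | ∑ n ∈ (Finset.Icc 2 k).filter (fun n => Even n), X n ω ≤ t / 2} := by
    intro ω hω
    simp only [Set.mem_setOf_eq] at hω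
    rw [hsplit ω] at hω
    by_cases h : ∑ n ∈ (Finset.Icc 2 k).filter (fun n => Odd n), X n ω ≤ t / 2
    · exact Or.inl h
    · exact Or.inr (by push_neg at h; simp only [Set.mem_setOf_eq]; linarith)
  calc P {ω | ∑ n ∈ Finset.Icc 2 k, X n ω ≤ t}
      ≤ P ({ω | ∑ n ∈ (Finset.Icc 2 k).filter (fun n => Odd n), X n ω ≤ t / 2} ∪
          {ω | ∑ n ∈ (Finset.Icc 2 k).filter (fun n => Even n), X n ω ≤ t / 2}) :=
        measure_mono hsub
    _ ≤ P {ω | ∑ n ∈ (Finset.Icc 2 k).filter (fun n => Odd n), X n ω ≤ t / 2} +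
        P {ω | ∑ n ∈ (Finset.Icc 2 k).filter (fun n => Even n), X n ω ≤ t / 2} :=
        measure_union_le _ _
    _ ≤ ENNReal.ofReal B + ENNReal.ofReal B := add_le_add hPodd hPeven
    _ = ENNReal.ofReal (2 * F ^ (((k : ℝ) - 2) / 2) * Real.exp (l * t / 2)) := by
        rw [← ENNReal.ofReal_add hBnn hBnn]
        congr 1
        rw [hB]
        ring
end

section
/- For all real numbers K > 0, w ≥ 1 and x > 0, max(x, 1) · sup over λ with 0 < λ < 1/K of ( λ·min(x, 1)/(3w) − λ²·K²/(1 − λ·K) ) ≥ ( min(x², x) ) / ( 42 · max(K², K) · w² ). -/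
open Set

/-- Explicit lower bound (4.11): for `K > 0`, `w ≥ 1`, `x > 0`,
`max(x,1) · sup_{0<λ<1/K} (λ min(x,1)/(3w) − λ²K²/(1−λK)) ≥ min(x²,x)/(42 max(K²,K) w²)`. -/
theorem stmt_10 (K w x : ℝ) (hK : 0 < K) (hw : 1 ≤ w) (hx : 0 < x) :
    min (x ^ 2) x / (42 * max (K ^ 2) K * w ^ 2) ≤
      max x 1 *
        sSup ((fun l : ℝ => l * min x 1 / (3 * w) - l ^ 2 * K ^ 2 / (1 - l * K)) ''
          Set.Ioo 0 (1 / K)) := by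
  have hw0 : (0:ℝ) < w := lt_of_lt_of_le one_pos hw
  set m : ℝ := min x 1 with hm
  have hm0 : 0 < m := lt_min hx one_pos
  have hm1 : m ≤ 1 := min_le_right _ _
  have hminsq : min (x ^ 2) x = max x 1 * m ^ 2 := by
    rcases le_total x 1 with h | h
    · rw [hm, min_eq_left h, max_eq_right h, min_eq_left (by nlinarith)]; ring
    · rw [hm, min_eq_right h, max_eq_left h, min_eq_right (by nlinarith)]; ring
  set y : ℝ := m / (3 * w) with hy
  have hy0 : 0 < y := div_pos hm0 (by positivity)
  have hy13 : y ≤ 1 / 3 := by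
    rw [hy, div_le_div_iff₀ (by positivity) (by norm_num)]
    nlinarith
  have hmy : ∀ t : ℝ, t * m / (3 * w) = t * y := by
    intro t; rw [hy]; ring
  have hy2 : y ^ 2 = m ^ 2 / (9 * w ^ 2) := by rw [hy]; field_simp; ring
  clear_value y
  set l : ℝ := y / (K * (y + 2 * K)) with hl
  have hden : 0 < K * (y + 2 * K) := by positivity
  have hl0 : 0 < l := div_pos hy0 hden
  have hlK : l * K = y / (y + 2 * K) := by
    rw [hl]; field_simp
  have hlK1 : l * K < 1 := by
    rw [hlK, div_lt_one (by positivity)]; linarith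
  have hlmem : l ∈ Set.Ioo 0 (1 / K) := by
    refine ⟨hl0, ?_⟩
    rw [lt_div_iff₀ hK]; exact hlK1
  have h1sub : 1 - l * K = 2 * K / (y + 2 * K) := by
    rw [hlK]; field_simp; ring
  clear_value l
  have h2 : (0:ℝ) < y + 2 * K := by positivity
  have hval : l * m / (3 * w) - l ^ 2 * K ^ 2 / (1 - l * K)
      = y ^ 2 / (2 * K * y + 4 * K ^ 2) := by
    rw [hmy, h1sub, hl]
    field_simp
    ring
  -- bounded above
  have hbdd : BddAbove ((fun t : ℝ => t * m / (3 * w) - t ^ 2 * K ^ 2 / (1 - t * K)) ''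
      Set.Ioo 0 (1 / K)) := by
    refine ⟨(1 / K) * y, ?_⟩
    rintro z ⟨t, ⟨ht0, ht1⟩, rfl⟩
    have htK : t * K < 1 := by rwa [← lt_div_iff₀ hK]
    have h1 : (0:ℝ) ≤ t ^ 2 * K ^ 2 / (1 - t * K) := by
      apply div_nonneg (by positivity); linarith
    simp only [hmy]
    have h3 : t * y ≤ (1 / K) * y :=
      mul_le_mul_of_nonneg_right (le_of_lt ht1) (le_of_lt hy0)
    linarith
  have hsup : y ^ 2 / (2 * K * y + 4 * K ^ 2) ≤
      sSup ((fun t : ℝ => t * m / (3 * w) - t ^ 2 * K ^ 2 / (1 - t * K)) ''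
        Set.Ioo 0 (1 / K)) := by
    rw [← hval]
    exact le_csSup hbdd ⟨l, hlmem, rfl⟩
  -- final arithmetic
  have hMK : 0 < max (K ^ 2) K := lt_max_of_lt_right hK
  have hmaxx : 0 < max x 1 := lt_max_of_lt_right one_pos
  have hK2 : K ≤ max (K ^ 2) K := le_max_right _ _
  have hK1 : K ^ 2 ≤ max (K ^ 2) K := le_max_left _ _
  have hdenpos : (0:ℝ) < 2 * K * y + 4 * K ^ 2 := by positivity
  have hkey : min (x ^ 2) x / (42 * max (K ^ 2) K * w ^ 2)
      ≤ max x 1 * (y ^ 2 / (2 * K * y + 4 * K ^ 2)) := by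
    rw [hminsq, hy2]
    have hrw : max x 1 * (m ^ 2 / (9 * w ^ 2) / (2 * K * y + 4 * K ^ 2))
        = max x 1 * m ^ 2 / (9 * w ^ 2 * (2 * K * y + 4 * K ^ 2)) := by
      rw [div_div]; ring
    rw [hrw]
    apply div_le_div_of_nonneg_left (by positivity) (by positivity)
    have e1 : K * w ^ 2 ≤ max (K ^ 2) K * w ^ 2 :=
      mul_le_mul_of_nonneg_right hK2 (by positivity)
    have e2 : K ^ 2 * w ^ 2 ≤ max (K ^ 2) K * w ^ 2 :=
      mul_le_mul_of_nonneg_right hK1 (by positivity)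
    have e3 : K * y ≤ K * (1 / 3) := mul_le_mul_of_nonneg_left hy13 hK.le
    have e4 : K * y * w ^ 2 ≤ K * (1 / 3) * w ^ 2 :=
      mul_le_mul_of_nonneg_right e3 (by positivity)
    nlinarith [e1, e2, e4]
  calc min (x ^ 2) x / (42 * max (K ^ 2) K * w ^ 2)
      ≤ max x 1 * (y ^ 2 / (2 * K * y + 4 * K ^ 2)) := hkey
    _ ≤ _ := mul_le_mul_of_nonneg_left hsup (le_of_lt hmaxx)
end

section
/- Let n ≥ 2 be an integer and let ξ₂, ξ₃, …, ξ_n be identically distributed real-valued random variables on a probability space (Ω, 𝓐, P) with E[ξ₂] = 0 and E[|ξ₂|^p] ≤ p!·K^p for every integer p ≥ 1, where K > 0 is a constant. Assume that the subfamily of the ξ_k with odd index k is mutually independent and the subfamily of the ξ_k with even index k is mutually independent. Then for every a > 0 and every λ with 0 < λ < 1/K, P( ξ₂ + ξ₃ + ⋯ + ξ_n ≥ a ) ≤ 2 · exp( −λ·a/2 + (n/2)·λ²·K²/(1 − λ·K) ). -/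
open MeasureTheory Real ProbabilityTheory

/-- Pointwise bound `e^x ≤ 1 + x + (e^|x| - 1 - |x|)`. -/
lemma exp_le_aux_stmt14 (x : ℝ) : Real.exp x ≤ 1 + x + (Real.exp |x| - 1 - |x|) := by
  rcases le_or_gt 0 x with h | h
  · rw [abs_of_nonneg h]; linarith
  · have hs : -x ≤ Real.sinh (-x) := Real.self_le_sinh_iff.mpr (by linarith)
    rw [Real.sinh_eq] at hs
    simp only [neg_neg] at hs
    rw [abs_of_neg h]
    linarith

set_option maxHeartbeats 1000000 in
/-- Power-series identity for the exponential remainder, in `ℝ≥0∞`. -/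
lemma series_aux_stmt14 {y : ℝ} (hy : 0 ≤ y) :
    ENNReal.ofReal (Real.exp y - 1 - y) =
      ∑' p : ℕ, ENNReal.ofReal (y ^ (p + 2) / ((p + 2).factorial : ℝ)) := by
  have hsum : Summable (fun n : ℕ => y ^ n / (n.factorial : ℝ)) :=
    Real.summable_pow_div_factorial y
  have h1 : Summable (fun n : ℕ => y ^ (n + 1) / ((n + 1).factorial : ℝ)) :=
    (summable_nat_add_iff 1).mpr hsum
  have h2 : Summable (fun n : ℕ => y ^ (n + 2) / ((n + 2).factorial : ℝ)) :=
    (summable_nat_add_iff 2).mpr hsum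
  have hexp : Real.exp y = ∑' n : ℕ, y ^ n / (n.factorial : ℝ) := by
    rw [Real.exp_eq_exp_ℝ, NormedSpace.exp_eq_tsum_div]
  have key : Real.exp y - 1 - y = ∑' p : ℕ, y ^ (p + 2) / ((p + 2).factorial : ℝ) := by
    have e1 : (∑' n : ℕ, y ^ n / (n.factorial : ℝ)) =
        y ^ 0 / ((0:ℕ).factorial : ℝ) + ∑' n : ℕ, y ^ (n + 1) / ((n + 1).factorial : ℝ) :=
      Summable.tsum_eq_zero_add hsum
    have e2 : (∑' n : ℕ, y ^ (n + 1) / ((n + 1).factorial : ℝ)) =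
        y ^ (0 + 1) / ((0 + 1).factorial : ℝ)
          + ∑' n : ℕ, y ^ (n + 1 + 1) / ((n + 1 + 1).factorial : ℝ) :=
      Summable.tsum_eq_zero_add h1
    have e3 : (fun n : ℕ => y ^ (n + 1 + 1) / ((n + 1 + 1).factorial : ℝ)) =
        fun n : ℕ => y ^ (n + 2) / ((n + 2).factorial : ℝ) := rfl
    rw [hexp, e1, e2, e3]
    norm_num [Nat.factorial]
  rw [key]
  exact ENNReal.ofReal_tsum_of_nonneg (fun p => by positivity) h2

/-- Bound on the moment generating function from moment bounds. -/
lemma mgf_bound_stmt14 {Ω : Type*} [MeasurableSpace Ω] (P : Measure Ω) [IsProbabilityMeasure P]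
    (X : Ω → ℝ) (hm : Measurable X) (K l : ℝ) (hK : 0 < K) (hl : 0 < l) (hlK : l * K < 1)
    (hcent : ∫ ω, X ω ∂P = 0) (hint : Integrable X P)
    (hmom : ∀ p : ℕ, 1 ≤ p →
      ∫⁻ ω, ENNReal.ofReal (|X ω| ^ p) ∂P ≤ ENNReal.ofReal ((Nat.factorial p : ℝ) * K ^ p)) :
    Integrable (fun ω => Real.exp (l * X ω)) P ∧
      mgf X P l ≤ Real.exp (l ^ 2 * K ^ 2 / (1 - l * K)) := by
  set c : ℝ := l ^ 2 * K ^ 2 / (1 - l * K) with hc_def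
  have hden : 0 < 1 - l * K := by linarith
  have hc : 0 ≤ c := div_nonneg (by positivity) hden.le
  have hlK0 : 0 ≤ l * K := by positivity
  set r : Ω → ℝ := fun ω => Real.exp (l * |X ω|) - 1 - l * |X ω| with hr_def
  have hr_nonneg : ∀ ω, 0 ≤ r ω := fun ω => by
    have := Real.add_one_le_exp (l * |X ω|)
    simp only [hr_def]; linarith
  have h0 : Measurable fun ω => l * |X ω| := hm.abs.const_mul l
  have hr_meas : Measurable r := (h0.exp.sub measurable_const).sub h0
  -- the key lintegral bound on the remainder
  have key : ∫⁻ ω, ENNReal.ofReal (r ω) ∂P ≤ ENNReal.ofReal c := by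
    have hgeo : Summable (fun p : ℕ => (l * K) ^ (p + 2)) :=
      (summable_nat_add_iff 2).mpr (summable_geometric_of_lt_one hlK0 hlK)
    have hterm_meas : ∀ p : ℕ,
        AEMeasurable (fun ω => ENNReal.ofReal ((l * |X ω|) ^ (p + 2) / (((p + 2).factorial : ℝ)))) P :=
      fun p => (ENNReal.measurable_ofReal.comp (((h0.pow_const _).div_const _))).aemeasurable
    calc ∫⁻ ω, ENNReal.ofReal (r ω) ∂P
        = ∑' p : ℕ, ∫⁻ ω, ENNReal.ofReal ((l * |X ω|) ^ (p + 2) / (((p + 2).factorial : ℝ))) ∂P := by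
          rw [← lintegral_tsum hterm_meas]
          refine lintegral_congr fun ω => ?_
          exact series_aux_stmt14 (by positivity)
      _ ≤ ∑' p : ℕ, ENNReal.ofReal ((l * K) ^ (p + 2)) := by
          refine ENNReal.tsum_le_tsum fun p => ?_
          have hmeasX : Measurable fun ω => ENNReal.ofReal (|X ω| ^ (p + 2)) :=
            ENNReal.measurable_ofReal.comp (hm.abs.pow_const _)
          calc ∫⁻ ω, ENNReal.ofReal ((l * |X ω|) ^ (p + 2) / (((p + 2).factorial : ℝ))) ∂P
              = ENNReal.ofReal (l ^ (p + 2) / (((p + 2).factorial : ℝ)))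
                  * ∫⁻ ω, ENNReal.ofReal (|X ω| ^ (p + 2)) ∂P := by
                rw [← lintegral_const_mul _ hmeasX]
                refine lintegral_congr fun ω => ?_
                rw [← ENNReal.ofReal_mul (by positivity)]
                congr 1
                rw [mul_pow]; ring
            _ ≤ ENNReal.ofReal (l ^ (p + 2) / (((p + 2).factorial : ℝ)))
                  * ENNReal.ofReal ((((p + 2).factorial : ℝ)) * K ^ (p + 2)) :=
                mul_le_mul_right (hmom (p + 2) (by omega)) _
            _ = ENNReal.ofReal ((l * K) ^ (p + 2)) := by
                rw [← ENNReal.ofReal_mul (by positivity)]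
                congr 1
                have hfac : (0:ℝ) < ((p + 2).factorial : ℝ) := by
                  exact_mod_cast Nat.factorial_pos _
                field_simp
                ring
      _ = ENNReal.ofReal c := by
          rw [← ENNReal.ofReal_tsum_of_nonneg (fun p => by positivity) hgeo]
          congr 1
          have e : (fun p : ℕ => (l * K) ^ (p + 2)) = fun p : ℕ => (l * K) ^ 2 * (l * K) ^ p := by
            funext p; ring
          rw [e, tsum_mul_left, tsum_geometric_of_lt_one hlK0 hlK, hc_def]
          field_simp
  have hr_int : Integrable r P := by
    refine ⟨hr_meas.aestronglyMeasurable, ?_⟩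
    rw [hasFiniteIntegral_iff_ofReal (ae_of_all _ hr_nonneg)]
    exact lt_of_le_of_lt key ENNReal.ofReal_lt_top
  have hptw : ∀ ω, Real.exp (l * X ω) ≤ 1 + l * X ω + r ω := fun ω => by
    have h := exp_le_aux_stmt14 (l * X ω)
    rwa [abs_mul, abs_of_pos hl] at h
  have hg_int : Integrable (fun ω => 1 + l * X ω + r ω) P :=
    ((integrable_const 1).add (hint.const_mul l)).add hr_int
  have hexp_int : Integrable (fun ω => Real.exp (l * X ω)) P := by
    refine hg_int.mono' ((hm.const_mul l).exp.aestronglyMeasurable) (ae_of_all _ fun ω => ?_)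
    rw [Real.norm_eq_abs, abs_of_pos (Real.exp_pos _)]
    exact hptw ω
  refine ⟨hexp_int, ?_⟩
  have hr_integral : ∫ ω, r ω ∂P ≤ c := by
    rw [integral_eq_lintegral_of_nonneg_ae (ae_of_all _ hr_nonneg) hr_meas.aestronglyMeasurable]
    calc (∫⁻ ω, ENNReal.ofReal (r ω) ∂P).toReal ≤ (ENNReal.ofReal c).toReal :=
          ENNReal.toReal_mono ENNReal.ofReal_ne_top key
      _ = c := ENNReal.toReal_ofReal hc
  have hmgf : mgf X P l ≤ 1 + c := by
    have h1 : mgf X P l = ∫ ω, Real.exp (l * X ω) ∂P := rfl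
    rw [h1]
    calc ∫ ω, Real.exp (l * X ω) ∂P ≤ ∫ ω, (1 + l * X ω + r ω) ∂P :=
          integral_mono hexp_int hg_int hptw
      _ = (∫ ω, (1 + l * X ω) ∂P) + ∫ ω, r ω ∂P :=
          integral_add ((integrable_const 1).add (hint.const_mul l)) hr_int
      _ = (1 + l * ∫ ω, X ω ∂P) + ∫ ω, r ω ∂P := by
          rw [integral_add (integrable_const 1) (hint.const_mul l), integral_const_mul]
          simp
      _ ≤ 1 + c := by rw [hcent]; linarith
  calc mgf X P l ≤ 1 + c := hmgf
    _ ≤ Real.exp c := by linarith [Real.add_one_le_exp c]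

/-- Chernoff bound for a sum of independent variables with uniformly bounded mgf. -/
lemma chernoff_aux_stmt14 {Ω : Type*} [MeasurableSpace Ω] (P : Measure Ω) [IsProbabilityMeasure P]
    {ι : Type*} (X : ι → Ω → ℝ) (hmeas : ∀ i, Measurable (X i))
    (hindep : iIndepFun X P) (s : Finset ι)
    (l c b a2 : ℝ) (hl : 0 < l)
    (hint : ∀ i, Integrable (fun ω => Real.exp (l * X i ω)) P)
    (hmgf : ∀ i, mgf (X i) P l ≤ Real.exp c)
    (hcard : (s.card : ℝ) * c ≤ b) :
    P {ω | a2 ≤ ∑ i ∈ s, X i ω} ≤ ENNReal.ofReal (Real.exp (-l * a2 + b)) := by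
  have hS_int : Integrable (fun ω => Real.exp (l * (∑ i ∈ s, X i) ω)) P :=
    hindep.integrable_exp_mul_sum hmeas (fun i _ => hint i)
  have hset : {ω | a2 ≤ ∑ i ∈ s, X i ω} = {ω | a2 ≤ (∑ i ∈ s, X i) ω} := by
    ext ω; simp [Finset.sum_apply]
  have chern := measure_ge_le_exp_mul_mgf (μ := P) (X := ∑ i ∈ s, X i) a2 hl.le hS_int
  have hmgfS : mgf (∑ i ∈ s, X i) P l ≤ Real.exp ((s.card : ℝ) * c) := by
    rw [hindep.mgf_sum hmeas s]
    calc ∏ i ∈ s, mgf (X i) P l ≤ ∏ i ∈ s, Real.exp c :=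
          Finset.prod_le_prod (fun i _ => mgf_nonneg) (fun i _ => hmgf i)
      _ = Real.exp ((s.card : ℝ) * c) := by
          rw [Finset.prod_const, ← Real.exp_nat_mul]
  rw [hset, ← ENNReal.ofReal_toReal (measure_ne_top P _)]
  apply ENNReal.ofReal_le_ofReal
  calc (P {ω | a2 ≤ (∑ i ∈ s, X i) ω}).toReal
      ≤ Real.exp (-l * a2) * mgf (∑ i ∈ s, X i) P l := chern
    _ ≤ Real.exp (-l * a2) * Real.exp b := by
        have h1 : mgf (∑ i ∈ s, X i) P l ≤ Real.exp b :=
          hmgfS.trans (Real.exp_le_exp.mpr hcard)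
        exact mul_le_mul_of_nonneg_left h1 (Real.exp_pos _).le
    _ = Real.exp (-l * a2 + b) := (Real.exp_add _ _).symm

/-- Bernstein-type bound for a 2-dependent family: if `ξ₂, …, ξ_n` are identically
distributed, centered, satisfy `E[|ξ₂|^p] ≤ p! K^p` for all `p ≥ 1`, and the odd-indexed
and even-indexed subfamilies are each mutually independent, then for `a > 0` and
`0 < λ < 1/K`, `P(ξ₂ + ⋯ + ξ_n ≥ a) ≤ 2 exp(−λa/2 + (n/2) λ²K²/(1−λK))`. -/
theorem stmt_14 {Ω : Type*} [MeasurableSpace Ω] (P : Measure Ω) [IsProbabilityMeasure P]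
    (n : ℕ) (hn : 2 ≤ n) (ξ : ℕ → Ω → ℝ) (hmeas : ∀ k, Measurable (ξ k))
    (K : ℝ) (hK : 0 < K)
    (hid : ∀ k ∈ Finset.Icc 2 n, IdentDistrib (ξ k) (ξ 2) P P)
    (hcent : ∫ ω, ξ 2 ω ∂P = 0) (hint : Integrable (ξ 2) P)
    (hmom : ∀ p : ℕ, 1 ≤ p →
      ∫⁻ ω, ENNReal.ofReal (|ξ 2 ω| ^ p) ∂P ≤ ENNReal.ofReal ((Nat.factorial p : ℝ) * K ^ p))
    (hindep_odd :
      iIndepFun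
        (fun k : {k : ℕ // k ∈ Finset.Icc 2 n ∧ Odd k} => ξ k) P)
    (hindep_even :
      iIndepFun
        (fun k : {k : ℕ // k ∈ Finset.Icc 2 n ∧ Even k} => ξ k) P) :
    ∀ a : ℝ, 0 < a → ∀ l : ℝ, 0 < l → l < 1 / K →
      P {ω | a ≤ ∑ k ∈ Finset.Icc 2 n, ξ k ω} ≤
        ENNReal.ofReal
          (2 * Real.exp (-l * a / 2 + ((n : ℝ) / 2) * l ^ 2 * K ^ 2 / (1 - l * K))) := by
  classical
  intro a ha l hl hlK'
  have hlK : l * K < 1 := (lt_div_iff₀ hK).mp hlK'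
  set c : ℝ := l ^ 2 * K ^ 2 / (1 - l * K) with hc_def
  have hden : 0 < 1 - l * K := by linarith
  have hc : 0 ≤ c := div_nonneg (by positivity) hden.le
  obtain ⟨hint2, hmgf2⟩ :=
    mgf_bound_stmt14 P (ξ 2) (hmeas 2) K l hK hl hlK hcent hint hmom
  have hu : Measurable fun x : ℝ => Real.exp (l * x) := (measurable_id.const_mul l).exp
  have hk_int : ∀ k ∈ Finset.Icc 2 n, Integrable (fun ω => Real.exp (l * ξ k ω)) P := by
    intro k hk
    have h := ((hid k hk).comp hu).integrable_iff
    exact h.mpr hint2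
  have hk_mgf : ∀ k ∈ Finset.Icc 2 n, mgf (ξ k) P l ≤ Real.exp c := by
    intro k hk
    have h := ((hid k hk).comp hu).integral_eq
    have h2 : mgf (ξ k) P l = mgf (ξ 2) P l := by
      simpa [mgf, Function.comp] using h
    rw [h2]; exact hmgf2
  -- odd and even index sums
  have hsum_odd : ∀ ω : Ω,
      (∑ i ∈ (Finset.Icc 2 n).subtype (fun k => k ∈ Finset.Icc 2 n ∧ Odd k), ξ i.1 ω)
        = ∑ k ∈ (Finset.Icc 2 n).filter (fun k => Odd k), ξ k ω := by
    intro ω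
    calc (∑ i ∈ (Finset.Icc 2 n).subtype (fun k => k ∈ Finset.Icc 2 n ∧ Odd k), ξ i.1 ω)
        = ∑ k ∈ (Finset.Icc 2 n).filter (fun k => k ∈ Finset.Icc 2 n ∧ Odd k), ξ k ω :=
          Finset.sum_subtype_eq_sum_filter (fun k => ξ k ω)
      _ = ∑ k ∈ (Finset.Icc 2 n).filter (fun k => Odd k), ξ k ω := by
          refine Finset.sum_congr (Finset.filter_congr fun k hk => ?_) fun _ _ => rfl
          exact and_iff_right hk
  have hsum_even : ∀ ω : Ω,
      (∑ i ∈ (Finset.Icc 2 n).subtype (fun k => k ∈ Finset.Icc 2 n ∧ Even k), ξ i.1 ω)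
        = ∑ k ∈ (Finset.Icc 2 n).filter (fun k => Even k), ξ k ω := by
    intro ω
    calc (∑ i ∈ (Finset.Icc 2 n).subtype (fun k => k ∈ Finset.Icc 2 n ∧ Even k), ξ i.1 ω)
        = ∑ k ∈ (Finset.Icc 2 n).filter (fun k => k ∈ Finset.Icc 2 n ∧ Even k), ξ k ω :=
          Finset.sum_subtype_eq_sum_filter (fun k => ξ k ω)
      _ = ∑ k ∈ (Finset.Icc 2 n).filter (fun k => Even k), ξ k ω := by
          refine Finset.sum_congr (Finset.filter_congr fun k hk => ?_) fun _ _ => rfl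
          exact and_iff_right hk
  -- cardinality bounds
  have hcardE : ((Finset.Icc 2 n).filter (fun k => Even k)).card = n / 2 := by
    have h1 : ((Finset.Icc 2 n).filter (fun k => Even k))
        = ((Finset.Ioc 0 n).filter (fun k => 2 ∣ k)) := by
      ext k
      simp only [Finset.mem_filter, Finset.mem_Icc, Finset.mem_Ioc, Nat.even_iff]
      omega
    rw [h1, Nat.Ioc_filter_dvd_card_eq_div]
  have hcard_sum : ((Finset.Icc 2 n).filter (fun k => Odd k)).card
      + ((Finset.Icc 2 n).filter (fun k => Even k)).card = n - 1 := by
    have h2 : ((Finset.Icc 2 n).filter (fun k => Even k))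
        = ((Finset.Icc 2 n).filter (fun k => ¬ Odd k)) := by
      refine Finset.filter_congr fun k _ => ?_
      simp only [Nat.even_iff, Nat.odd_iff]
      omega
    rw [h2, Finset.card_filter_add_card_filter_not, Nat.card_Icc]
    omega
  have hcardO2 : 2 * ((Finset.Icc 2 n).filter (fun k => Odd k)).card ≤ n := by omega
  have hcardE2 : 2 * ((Finset.Icc 2 n).filter (fun k => Even k)).card ≤ n := by omega
  set b : ℝ := ((n : ℝ) / 2) * c with hb_def
  have hsub_filterO : ((Finset.Icc 2 n).filter (fun k => k ∈ Finset.Icc 2 n ∧ Odd k))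
      = ((Finset.Icc 2 n).filter (fun k => Odd k)) :=
    Finset.filter_congr fun k hk => and_iff_right hk
  have hsub_filterE : ((Finset.Icc 2 n).filter (fun k => k ∈ Finset.Icc 2 n ∧ Even k))
      = ((Finset.Icc 2 n).filter (fun k => Even k)) :=
    Finset.filter_congr fun k hk => and_iff_right hk
  have hcardO_real :
      ((((Finset.Icc 2 n).subtype (fun k => k ∈ Finset.Icc 2 n ∧ Odd k)).card : ℝ)) * c ≤ b := by
    have h1 : ((Finset.Icc 2 n).subtype (fun k => k ∈ Finset.Icc 2 n ∧ Odd k)).card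
        = ((Finset.Icc 2 n).filter (fun k => Odd k)).card := by
      rw [Finset.card_subtype, hsub_filterO]
    have h3 : (((Finset.Icc 2 n).subtype (fun k => k ∈ Finset.Icc 2 n ∧ Odd k)).card : ℝ)
        ≤ (n : ℝ) / 2 := by
      rw [h1]
      have h4 : (2 : ℝ) * (((Finset.Icc 2 n).filter (fun k => Odd k)).card : ℝ) ≤ (n : ℝ) := by
        exact_mod_cast hcardO2
      linarith
    exact mul_le_mul_of_nonneg_right h3 hc
  have hcardE_real :
      ((((Finset.Icc 2 n).subtype (fun k => k ∈ Finset.Icc 2 n ∧ Even k)).card : ℝ)) * c ≤ b := by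
    have h1 : ((Finset.Icc 2 n).subtype (fun k => k ∈ Finset.Icc 2 n ∧ Even k)).card
        = ((Finset.Icc 2 n).filter (fun k => Even k)).card := by
      rw [Finset.card_subtype, hsub_filterE]
    have h3 : (((Finset.Icc 2 n).subtype (fun k => k ∈ Finset.Icc 2 n ∧ Even k)).card : ℝ)
        ≤ (n : ℝ) / 2 := by
      rw [h1]
      have h4 : (2 : ℝ) * (((Finset.Icc 2 n).filter (fun k => Even k)).card : ℝ) ≤ (n : ℝ) := by
        exact_mod_cast hcardE2
      linarith
    exact mul_le_mul_of_nonneg_right h3 hc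
  -- Chernoff bounds for the two halves
  have hchO : P {ω | a / 2 ≤
        ∑ i ∈ (Finset.Icc 2 n).subtype (fun k => k ∈ Finset.Icc 2 n ∧ Odd k), ξ i.1 ω}
      ≤ ENNReal.ofReal (Real.exp (-l * (a / 2) + b)) :=
    chernoff_aux_stmt14 P (fun i : {k : ℕ // k ∈ Finset.Icc 2 n ∧ Odd k} => ξ i.1)
      (fun i => hmeas i.1) hindep_odd _ l c b (a / 2) hl
      (fun i => hk_int i.1 i.2.1) (fun i => hk_mgf i.1 i.2.1) hcardO_real
  have hchE : P {ω | a / 2 ≤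
        ∑ i ∈ (Finset.Icc 2 n).subtype (fun k => k ∈ Finset.Icc 2 n ∧ Even k), ξ i.1 ω}
      ≤ ENNReal.ofReal (Real.exp (-l * (a / 2) + b)) :=
    chernoff_aux_stmt14 P (fun i : {k : ℕ // k ∈ Finset.Icc 2 n ∧ Even k} => ξ i.1)
      (fun i => hmeas i.1) hindep_even _ l c b (a / 2) hl
      (fun i => hk_int i.1 i.2.1) (fun i => hk_mgf i.1 i.2.1) hcardE_real
  -- event inclusion
  have hsubset : {ω | a ≤ ∑ k ∈ Finset.Icc 2 n, ξ k ω}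
      ⊆ {ω | a / 2 ≤
            ∑ i ∈ (Finset.Icc 2 n).subtype (fun k => k ∈ Finset.Icc 2 n ∧ Odd k), ξ i.1 ω}
        ∪ {ω | a / 2 ≤
            ∑ i ∈ (Finset.Icc 2 n).subtype (fun k => k ∈ Finset.Icc 2 n ∧ Even k), ξ i.1 ω} := by
    intro ω hω
    simp only [Set.mem_setOf_eq] at hω
    have hsplit : (∑ k ∈ (Finset.Icc 2 n).filter (fun k => Odd k), ξ k ω)
        + (∑ k ∈ (Finset.Icc 2 n).filter (fun k => Even k), ξ k ω)
        = ∑ k ∈ Finset.Icc 2 n, ξ k ω := by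
      have h2 : ((Finset.Icc 2 n).filter (fun k => Even k))
          = ((Finset.Icc 2 n).filter (fun k => ¬ Odd k)) := by
        refine Finset.filter_congr fun k _ => ?_
        simp only [Nat.even_iff, Nat.odd_iff]
        omega
      rw [h2]
      exact Finset.sum_filter_add_sum_filter_not _ _ _
    simp only [Set.mem_union, Set.mem_setOf_eq, hsum_odd ω, hsum_even ω]
    by_contra hcon
    push_neg at hcon
    obtain ⟨h1, h2⟩ := hcon
    linarith
  -- assemble
  have hE : Real.exp (-l * (a / 2) + b)
      = Real.exp (-l * a / 2 + ((n : ℝ) / 2) * l ^ 2 * K ^ 2 / (1 - l * K)) := by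
    congr 1
    rw [hb_def, hc_def]
    ring
  calc P {ω | a ≤ ∑ k ∈ Finset.Icc 2 n, ξ k ω}
      ≤ P ({ω | a / 2 ≤
              ∑ i ∈ (Finset.Icc 2 n).subtype (fun k => k ∈ Finset.Icc 2 n ∧ Odd k), ξ i.1 ω}
          ∪ {ω | a / 2 ≤
              ∑ i ∈ (Finset.Icc 2 n).subtype (fun k => k ∈ Finset.Icc 2 n ∧ Even k), ξ i.1 ω}) :=
        measure_mono hsubset
    _ ≤ P {ω | a / 2 ≤
              ∑ i ∈ (Finset.Icc 2 n).subtype (fun k => k ∈ Finset.Icc 2 n ∧ Odd k), ξ i.1 ω}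
          + P {ω | a / 2 ≤
              ∑ i ∈ (Finset.Icc 2 n).subtype (fun k => k ∈ Finset.Icc 2 n ∧ Even k), ξ i.1 ω} :=
        measure_union_le _ _
    _ ≤ ENNReal.ofReal (Real.exp (-l * (a / 2) + b))
          + ENNReal.ofReal (Real.exp (-l * (a / 2) + b)) := add_le_add hchO hchE
    _ = ENNReal.ofReal
          (2 * Real.exp (-l * a / 2 + ((n : ℝ) / 2) * l ^ 2 * K ^ 2 / (1 - l * K))) := by
        rw [← ENNReal.ofReal_add (Real.exp_pos _).le (Real.exp_pos _).le, hE]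
        ring_nf
end
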